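/- arXiv:1212.6609 — 2 statements merged into one kernel-verified Lean document; each statement's English description precedes it below -/
import Mathlib

section
/- Let P be a finite set of positive integers, m = min P, n > m, u = FW(Q, n-m) where Q = {p-m : p ∈ P, p ≠ m} ∪ {m}, and let w be the prefix of FW(P,n) of length m. If m ≤ n - m then w = pref_m(u), and if m > n - m then w = u · |u| · (|u|+1) ⋯ (m-1) (concatenating u with the letters n-m, n-m+1, …, m-1). -/
/-- minimum of a finite set of naturals (as `sInf`). -/
noncomputable def mP (P : Finset ℕ) : ℕ := sInf (↑P : Set ℕ)

/-- the generating relation `∼_{P,k}` on `{0,…,k-1}`. -/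
def simRel (P : Finset ℕ) (k i j : ℕ) : Prop :=
  i < k ∧ j < k ∧ (i % mP P = j % mP P ∨
    ∃ i' j', i' < k ∧ j' < k ∧ i' % mP P = i % mP P ∧ j' % mP P = j % mP P ∧
      (max i' j' - min i' j') ∈ P)

/-- the class of `i` under the equivalence closure `≈_{P,k}`. -/
def cls (P : Finset ℕ) (k i : ℕ) : Set ℕ := {j | Relation.EqvGen (simRel P k) i j}

/-- the FW-word: `FW P k i = min [i]_{P,k}`. -/
noncomputable def FW (P : Finset ℕ) (k : ℕ) : ℕ → ℕ := fun i => sInf (cls P k i)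

/-- Euclidean reduction `Q = {p - m : p ∈ P, p ≠ m} ∪ {m}`. -/
noncomputable def Qred (P : Finset ℕ) : Finset ℕ :=
  ((P.erase (mP P)).image (fun p => p - mP P)) ∪ {mP P}

/-- `p` is a period of the word `w` of length `n`. -/
def HasPeriodF {A : Type*} (w : ℕ → A) (n p : ℕ) : Prop :=
  ∀ i, i + p < n → w i = w (i + p)

/-! ### Auxiliary development -/

/-- simple step relation: `i,j < k` and their difference lies in `S`. -/
def stepR (S : Finset ℕ) (k i j : ℕ) : Prop :=
  i < k ∧ j < k ∧ (max i j - min i j) ∈ S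

lemma eqv_bind {α : Type*} {r p : α → α → Prop}
    (h : ∀ a b, r a b → Relation.EqvGen p a b)
    {a b : α} (hab : Relation.EqvGen r a b) : Relation.EqvGen p a b := by
  induction hab with
  | rel x y hr => exact h x y hr
  | refl x => exact Relation.EqvGen.refl x
  | symm x y _ ih => exact Relation.EqvGen.symm _ _ ih
  | trans x y z _ _ ih1 ih2 => exact Relation.EqvGen.trans _ _ _ ih1 ih2

lemma chain_step {S : Finset ℕ} {k c : ℕ} (hc : c ∈ S) (t i : ℕ)
    (h : i + t * c < k) : Relation.EqvGen (stepR S k) i (i + t * c) := by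
  induction t with
  | zero => simpa using Relation.EqvGen.refl i
  | succ t ih =>
    rw [Nat.succ_mul, ← Nat.add_assoc] at h ⊢
    have hlt : i + t * c < k := by omega
    refine Relation.EqvGen.trans _ _ _ (ih hlt) (Relation.EqvGen.rel _ _ ?_)
    refine ⟨by omega, h, ?_⟩
    rw [max_eq_right (by omega : i + t * c ≤ i + t * c + c),
      min_eq_left (by omega : i + t * c ≤ i + t * c + c)]
    have he : i + t * c + c - (i + t * c) = c := by omega
    rw [he]; exact hc

lemma chain_mod {S : Finset ℕ} {k c i j : ℕ} (hc : c ∈ S)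
    (hij : i % c = j % c) (hi : i < k) (hj : j < k) :
    Relation.EqvGen (stepR S k) i j := by
  rcases le_total i j with h | h
  · obtain ⟨t, ht⟩ := (Nat.modEq_iff_dvd' h).mp hij
    have hj' : j = i + t * c := by rw [Nat.mul_comm]; omega
    rw [hj']; exact chain_step hc t i (hj' ▸ hj)
  · obtain ⟨t, ht⟩ := (Nat.modEq_iff_dvd' h).mp hij.symm
    have hi' : i = j + t * c := by rw [Nat.mul_comm]; omega
    exact Relation.EqvGen.symm _ _ (by rw [hi']; exact chain_step hc t j (hi' ▸ hi))

lemma mP_mem {S : Finset ℕ} (hS : S.Nonempty) : mP S ∈ S :=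
  Finset.mem_coe.mp (Nat.sInf_mem (Finset.coe_nonempty.mpr hS))

lemma mP_le {S : Finset ℕ} {p : ℕ} (hp : p ∈ S) : mP S ≤ p :=
  Nat.sInf_le (Finset.mem_coe.mpr hp)

lemma cls_eq_step (S : Finset ℕ) (hS : S.Nonempty) (k i : ℕ) :
    cls S k i = {j | Relation.EqvGen (stepR S k) i j} := by
  have hm : mP S ∈ S := mP_mem hS
  ext j
  simp only [cls, Set.mem_setOf_eq]
  constructor
  · refine fun h => eqv_bind (fun a b hab => ?_) h
    obtain ⟨ha, hb, hmod | ⟨i', j', hi', hj', hmi, hmj, hd⟩⟩ := hab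
    · exact chain_mod hm hmod ha hb
    · exact Relation.EqvGen.trans _ _ _ (chain_mod hm hmi.symm ha hi')
        (Relation.EqvGen.trans _ _ _ (Relation.EqvGen.rel _ _ ⟨hi', hj', hd⟩)
          (chain_mod hm hmj hj' hb))
  · refine fun h => eqv_bind (fun a b hab => ?_) h
    exact Relation.EqvGen.rel _ _
      ⟨hab.1, hab.2.1, Or.inr ⟨a, b, hab.1, hab.2.1, rfl, rfl, hab.2.2⟩⟩

lemma mQ_mem_self {P : Finset ℕ} : mP P ∈ Qred P := by
  rw [Qred, Finset.mem_union]
  exact Or.inr (Finset.mem_singleton.mpr rfl)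

lemma L1gen {P : Finset ℕ} (hP : P.Nonempty) {n : ℕ} (hn : mP P < n)
    {a b : ℕ} (hab : a ≤ b) (hb : b < n - mP P) (hq : b - a ∈ Qred P) :
    Relation.EqvGen (stepR P n) a b := by
  have hmP : mP P ∈ P := mP_mem hP
  rw [Qred, Finset.mem_union] at hq
  rcases hq with hq | hq
  · obtain ⟨p, hp, hpd⟩ := Finset.mem_image.mp hq
    have hpP : p ∈ P := Finset.mem_of_mem_erase hp
    have hpm : mP P ≤ p := mP_le hpP
    have key : a + p = b + mP P := by omega
    have h1 : Relation.EqvGen (stepR P n) a (b + mP P) :=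
      Relation.EqvGen.rel _ _ ⟨by omega, by omega, by
        rw [max_eq_right (by omega : a ≤ b + mP P),
          min_eq_left (by omega : a ≤ b + mP P)]
        have he : b + mP P - a = p := by omega
        rw [he]; exact hpP⟩
    have h2 : Relation.EqvGen (stepR P n) (b + mP P) b :=
      Relation.EqvGen.rel _ _ ⟨by omega, by omega, by
        rw [max_eq_left (by omega : b ≤ b + mP P),
          min_eq_right (by omega : b ≤ b + mP P)]
        have he : b + mP P - b = mP P := by omega
        rw [he]; exact hmP⟩
    exact Relation.EqvGen.trans _ _ _ h1 h2
  · rw [Finset.mem_singleton] at hq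
    exact Relation.EqvGen.rel _ _ ⟨by omega, by omega, by
      rw [max_eq_right hab, min_eq_left hab, hq]; exact hmP⟩

lemma L1 {P : Finset ℕ} (hP : P.Nonempty) {n : ℕ} (hn : mP P < n) {i j : ℕ}
    (h : Relation.EqvGen (stepR (Qred P) (n - mP P)) i j) :
    Relation.EqvGen (stepR P n) i j := by
  refine eqv_bind (fun a b hab => ?_) h
  obtain ⟨ha, hb, hq⟩ := hab
  rcases le_total a b with hle | hle
  · rw [max_eq_right hle, min_eq_left hle] at hq
    exact L1gen hP hn hle hb hq
  · rw [max_eq_left hle, min_eq_right hle] at hq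
    exact Relation.EqvGen.symm _ _ (L1gen hP hn hle ha hq)

lemma L2gen {P : Finset ℕ} (hP : P.Nonempty) {n : ℕ} (hn : mP P < n)
    {a b : ℕ} (hab : a ≤ b) (hb : b < n) (hq : b - a ∈ P) :
    a % mP P = b % mP P ∨
      (a % mP P < n - mP P ∧ b % mP P < n - mP P ∧
        Relation.EqvGen (stepR (Qred P) (n - mP P)) (a % mP P) (b % mP P)) := by
  set m := mP P with hm
  by_cases hpm : b - a = m
  · left
    have hb' : b = a + m := by omega
    rw [hb', Nat.add_mod_right]
  · right
    have hpm' : m ≤ b - a := mP_le hq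
    set q := b - a - m with hqdef
    have hqQ : q ∈ Qred P := by
      rw [Qred, Finset.mem_union]
      exact Or.inl (Finset.mem_image.mpr
        ⟨b - a, Finset.mem_erase.mpr ⟨hpm, hq⟩, rfl⟩)
    have hr : a % m ≤ a := Nat.mod_le a m
    have key : a % m + q < n - m := by omega
    have hb' : b = a + q + m := by omega
    have hmod : (a % m + q) % m = b % m := by
      have e1 : (a % m + q) % m = (a + q) % m := by
        rw [Nat.add_mod, Nat.mod_mod_of_dvd a (dvd_refl m), ← Nat.add_mod]
      rw [e1, hb', Nat.add_mod_right]
    have hbm : b % m < n - m := by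
      have h1 : (a % m + q) % m ≤ a % m + q := Nat.mod_le _ _
      omega
    have h1 : Relation.EqvGen (stepR (Qred P) (n - m)) (a % m) (a % m + q) :=
      Relation.EqvGen.rel _ _ ⟨by omega, key, by
        rw [max_eq_right (by omega : a % m ≤ a % m + q),
          min_eq_left (by omega : a % m ≤ a % m + q)]
        have he : a % m + q - a % m = q := by omega
        rw [he]; exact hqQ⟩
    have h2 : Relation.EqvGen (stepR (Qred P) (n - m)) (a % m + q) (b % m) :=
      chain_mod mQ_mem_self (by rw [hmod, Nat.mod_mod_of_dvd b (dvd_refl m)])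
        key hbm
    exact ⟨by omega, hbm, Relation.EqvGen.trans _ _ _ h1 h2⟩

lemma L2 {P : Finset ℕ} (hP : P.Nonempty) {n : ℕ} (hn : mP P < n) {i j : ℕ}
    (h : Relation.EqvGen (stepR P n) i j) :
    i % mP P = j % mP P ∨
      (i % mP P < n - mP P ∧ j % mP P < n - mP P ∧
        Relation.EqvGen (stepR (Qred P) (n - mP P)) (i % mP P) (j % mP P)) := by
  induction h with
  | refl x => exact Or.inl rfl
  | symm x y _ ih =>
    rcases ih with h | ⟨h1, h2, h3⟩
    · exact Or.inl h.symm
    · exact Or.inr ⟨h2, h1, Relation.EqvGen.symm _ _ h3⟩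
  | trans x y z _ _ ih1 ih2 =>
    rcases ih1 with h | ⟨h1, h2, h3⟩ <;> rcases ih2 with h' | ⟨h1', h2', h3'⟩
    · exact Or.inl (h.trans h')
    · exact Or.inr ⟨by rw [h]; exact h1', h2', by rw [h]; exact h3'⟩
    · exact Or.inr ⟨h1, by rw [← h']; exact h2, by rw [← h']; exact h3⟩
    · exact Or.inr ⟨h1, h2', Relation.EqvGen.trans _ _ _ h3 h3'⟩
  | rel x y hxy =>
    obtain ⟨hx, hy, hd⟩ := hxy
    rcases le_total x y with hle | hle
    · rw [max_eq_right hle, min_eq_left hle] at hd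
      exact L2gen hP hn hle hy hd
    · rw [max_eq_left hle, min_eq_right hle] at hd
      rcases L2gen hP hn hle hx hd with h | ⟨h1, h2, h3⟩
      · exact Or.inl h.symm
      · exact Or.inr ⟨h2, h1, Relation.EqvGen.symm _ _ h3⟩

theorem stmt10 (P : Finset ℕ) (hP : P.Nonempty) (hpos : ∀ p ∈ P, 0 < p)
    (n : ℕ) (hn : mP P < n) :
    (mP P ≤ n - mP P → ∀ i < mP P, FW P n i = FW (Qred P) (n - mP P) i) ∧
    (n - mP P < mP P → ∀ i < mP P,
      FW P n i = if i < n - mP P then FW (Qred P) (n - mP P) i else i) := by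
  have hQne : (Qred P).Nonempty := ⟨mP P, mQ_mem_self⟩
  have hcP : ∀ i, FW P n i = sInf {j | Relation.EqvGen (stepR P n) i j} :=
    fun i => by show sInf (cls P n i) = _; rw [cls_eq_step P hP]
  have hcQ : ∀ i, FW (Qred P) (n - mP P) i =
      sInf {j | Relation.EqvGen (stepR (Qred P) (n - mP P)) i j} :=
    fun i => by
      show sInf (cls (Qred P) (n - mP P) i) = _; rw [cls_eq_step _ hQne]
  have main : ∀ i < mP P, FW P n i = FW (Qred P) (n - mP P) i := by
    intro i him
    rw [hcP i, hcQ i]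
    have hCPne : Set.Nonempty {j | Relation.EqvGen (stepR P n) i j} :=
      ⟨i, Relation.EqvGen.refl i⟩
    have hCQne : Set.Nonempty
        {j | Relation.EqvGen (stepR (Qred P) (n - mP P)) i j} :=
      ⟨i, Relation.EqvGen.refl i⟩
    apply le_antisymm
    · exact Nat.sInf_le (L1 hP hn (Nat.sInf_mem hCQne))
    · have ha := Nat.sInf_mem hCPne
      have hai : sInf {j | Relation.EqvGen (stepR P n) i j} ≤ i :=
        Nat.sInf_le (Relation.EqvGen.refl i)
      rcases L2 hP hn ha with h | ⟨h1, h2, h3⟩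
      · rw [Nat.mod_eq_of_lt him,
          Nat.mod_eq_of_lt (lt_of_le_of_lt hai him)] at h
        rw [← h]
        exact Nat.sInf_le (Relation.EqvGen.refl i)
      · rw [Nat.mod_eq_of_lt him,
          Nat.mod_eq_of_lt (lt_of_le_of_lt hai him)] at h3
        exact Nat.sInf_le h3
  refine ⟨fun _ i him => main i him, fun _ i him => ?_⟩
  by_cases hin : i < n - mP P
  · rw [if_pos hin]; exact main i him
  · rw [if_neg hin, hcP i]
    have hCPne : Set.Nonempty {j | Relation.EqvGen (stepR P n) i j} :=
      ⟨i, Relation.EqvGen.refl i⟩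
    have ha := Nat.sInf_mem hCPne
    have hai : sInf {j | Relation.EqvGen (stepR P n) i j} ≤ i :=
      Nat.sInf_le (Relation.EqvGen.refl i)
    rcases L2 hP hn ha with h | ⟨h1, _, _⟩
    · rw [Nat.mod_eq_of_lt him,
        Nat.mod_eq_of_lt (lt_of_le_of_lt hai him)] at h
      exact h.symm
    · rw [Nat.mod_eq_of_lt him] at h1
      exact absurd h1 hin
end

section
/- Let P be a finite set of positive integers and n ≥ 0. Any word w of length n having all periods in P and attaining the maximal possible number of distinct letters is equal to FW(P,n) up to a renaming (injective substitution) of letters. -/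
lemma mP_mem_s13 (P : Finset ℕ) (hP : P.Nonempty) : mP P ∈ P := by
  have h : (↑P : Set ℕ).Nonempty := by exact_mod_cast hP
  have := Nat.sInf_mem h
  exact_mod_cast this

lemma period_mul {A : Type*} (w : ℕ → A) (n m : ℕ) (h : HasPeriodF w n m) :
    ∀ k a, a + k * m < n → w a = w (a + k * m) := by
  intro k
  induction k with
  | zero => simp
  | succ k ih =>
    intro a hlt
    have hmul : (k + 1) * m = m + k * m := by ring
    rw [hmul] at hlt ⊢
    have h1 : w a = w (a + m) := h a (by omega)
    have h2 : w (a + m) = w (a + m + k * m) := ih (a + m) (by omega)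
    rw [h1, h2]; ring_nf

lemma same_mod {A : Type*} (w : ℕ → A) (n : ℕ) (P : Finset ℕ) (hP : P.Nonempty)
    (hpos : ∀ p ∈ P, 0 < p) (hw : ∀ p ∈ P, HasPeriodF w n p) :
    ∀ a b, a < n → b < n → a % mP P = b % mP P → w a = w b := by
  have hm := mP_mem_s13 P hP
  have hmpos := hpos _ hm
  have key : ∀ a b, a ≤ b → b < n → a % mP P = b % mP P → w a = w b := by
    intro a b hab hb hmod
    have hdvd : mP P ∣ b - a := (Nat.modEq_iff_dvd' hab).mp hmod
    obtain ⟨k, hk⟩ := hdvd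
    rw [Nat.mul_comm] at hk
    have : b = a + k * mP P := by omega
    rw [this]
    exact period_mul w n (mP P) (hw _ hm) k a (by omega)
  intro a b ha hb hmod
  rcases le_total a b with h | h
  · exact key a b h hb hmod
  · exact (key b a h ha hmod.symm).symm

lemma w_respects {A : Type*} (w : ℕ → A) (n : ℕ) (P : Finset ℕ) (hP : P.Nonempty)
    (hpos : ∀ p ∈ P, 0 < p) (hw : ∀ p ∈ P, HasPeriodF w n p) :
    ∀ i j, simRel P n i j → w i = w j := by
  intro i j ⟨hi, hj, hcase⟩
  rcases hcase with hmod | ⟨i', j', hi', hj', hmi, hmj, hmem⟩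
  · exact same_mod w n P hP hpos hw i j hi hj hmod
  · have h1 : w i = w i' := same_mod w n P hP hpos hw i i' hi hi' hmi.symm
    have h2 : w j = w j' := same_mod w n P hP hpos hw j j' hj hj' hmj.symm
    have h3 : w i' = w j' := by
      rcases le_total i' j' with h | h
      · have : j' = i' + (j' - i') := by omega
        have hper := hw _ hmem
        rw [max_eq_right h, min_eq_left h] at hper
        rw [this]
        exact hper i' (by omega)
      · have : i' = j' + (i' - j') := by omega
        have hper := hw _ hmem
        rw [max_eq_left h, min_eq_right h] at hper
        rw [this]
        exact (hper j' (by omega)).symm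
    rw [h1, h3, ← h2]

lemma w_respects_eqv {A : Type*} (w : ℕ → A) (n : ℕ) (P : Finset ℕ) (hP : P.Nonempty)
    (hpos : ∀ p ∈ P, 0 < p) (hw : ∀ p ∈ P, HasPeriodF w n p) :
    ∀ i j, Relation.EqvGen (simRel P n) i j → w i = w j := by
  intro i j h
  induction h with
  | rel a b hab => exact w_respects w n P hP hpos hw a b hab
  | refl a => rfl
  | symm a b _ ih => exact ih.symm
  | trans a b c _ _ ih1 ih2 => exact ih1.trans ih2

lemma FW_mem_cls (P : Finset ℕ) (k i : ℕ) : Relation.EqvGen (simRel P k) i (FW P k i) :=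
  Nat.sInf_mem (⟨i, Relation.EqvGen.refl i⟩ : (cls P k i).Nonempty)

lemma FW_periods (P : Finset ℕ) (n : ℕ) : ∀ p ∈ P, HasPeriodF (FW P n) n p := by
  intro p hp i hlt
  have hrel : simRel P n i (i + p) :=
    ⟨by omega, hlt, Or.inr ⟨i, i + p, by omega, hlt, rfl, rfl, by
      rw [max_eq_right (by omega : i ≤ i + p), min_eq_left (by omega : i ≤ i + p)]
      simpa using hp⟩⟩
  have heqv : Relation.EqvGen (simRel P n) i (i + p) := Relation.EqvGen.rel _ _ hrel
  have hset : cls P n i = cls P n (i + p) := by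
    ext j
    constructor
    · intro h; exact (heqv.symm _ _).trans _ _ _ h
    · intro h; exact heqv.trans _ _ _ h
  unfold FW
  rw [hset]

theorem stmt13 {A : Type*} [DecidableEq A] (P : Finset ℕ) (hP : P.Nonempty)
    (hpos : ∀ p ∈ P, 0 < p) (n : ℕ) (w : ℕ → A)
    (hw : ∀ p ∈ P, HasPeriodF w n p)
    (hmax : ∀ v : ℕ → ℕ, (∀ p ∈ P, HasPeriodF v n p) →
      ((Finset.range n).image v).card ≤ ((Finset.range n).image w).card) :
    ∃ f : ℕ → A, (∀ i < n, w i = f (FW P n i)) ∧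
      Set.InjOn f (FW P n '' Set.Iio n) := by
  classical
  have hwFW : ∀ i, w i = w (FW P n i) :=
    fun i => w_respects_eqv w n P hP hpos hw i _ (FW_mem_cls P n i)
  refine ⟨w, fun i _ => hwFW i, ?_⟩
  set S : Finset ℕ := (Finset.range n).image (FW P n) with hS
  have hcoe : (FW P n '' Set.Iio n) = ↑S := by
    rw [hS, Finset.coe_image, Finset.coe_range]
  rw [hcoe]
  -- image of w on S equals image of w on range n
  have himg : S.image w = (Finset.range n).image w := by
    rw [hS, Finset.image_image]
    exact Finset.image_congr (fun x _ => (hwFW x).symm)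
  have h1 : ((Finset.range n).image w).card ≤ S.card := by
    rw [← himg]; exact Finset.card_image_le
  have h2 : S.card ≤ ((Finset.range n).image w).card :=
    hmax (FW P n) (FW_periods P n)
  have hcard : (S.image w).card = S.card := by
    rw [himg]; omega
  exact Finset.injOn_of_card_image_eq hcard
end
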